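/- arXiv:1301.3551 — 3 statements merged into one kernel-verified Lean document; each statement's English description precedes it below -/
import Mathlib

section
/- Let A and B be n×n real positive semidefinite matrices with nonnegative entries and tr(A) = tr(B) = 1, and suppose A_{ii} = 1/n for all i = 1, …, n. Then for every α > 0 with α ≠ 1, the matrix-based Rényi entropy of the normalized Hadamard product dominates that of B: S_α( (A ∘ B)/tr(A ∘ B) ) ≥ S_α(B), where (A ∘ B)_{ij} = A_{ij} B_{ij} is the Hadamard (entrywise) product. -/
open scoped BigOperators Matrix

/-- The trace of the `α`-th power of a Hermitian matrix, computed through its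
spectral decomposition: `tr(A^α) = ∑ i, λ_i ^ α` (with the convention `0 ^ α = 0`). -/
noncomputable def matrixPowTrace {ι : Type*} [Fintype ι] [DecidableEq ι]
    (α : ℝ) (A : Matrix ι ι ℝ) : ℝ :=
  if hA : A.IsHermitian then ∑ i, (hA.eigenvalues i) ^ α else 0

/-- The matrix-based Rényi entropy `S_α(A) = (1/(1-α)) · log₂ (tr (A^α))`. -/
noncomputable def matrixRenyiEntropy {ι : Type*} [Fintype ι] [DecidableEq ι]
    (α : ℝ) (A : Matrix ι ι ℝ) : ℝ :=
  (1 / (1 - α)) * Real.logb 2 (matrixPowTrace α A)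

section helpers
variable {n : ℕ} {M : Matrix (Fin n) (Fin n) ℝ} (hM : M.IsHermitian)

lemma complete_rel (i j : Fin n) :
    ∑ l, hM.eigenvectorBasis l i * hM.eigenvectorBasis l j
      = (1 : Matrix (Fin n) (Fin n) ℝ) i j := by
  have h := Matrix.mem_unitaryGroup_iff.mp (hM.eigenvectorUnitary).2
  have h2 := congrFun (congrFun h i) j
  simp only [Matrix.mul_apply, Matrix.star_apply, star_trivial,
    Matrix.IsHermitian.eigenvectorUnitary_apply] at h2
  exact h2

lemma norm_rel (l : Fin n) :
    ∑ i, hM.eigenvectorBasis l i * hM.eigenvectorBasis l i = 1 := by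
  have h := Matrix.mem_unitaryGroup_iff'.mp (hM.eigenvectorUnitary).2
  have h2 := congrFun (congrFun h l) l
  simp only [Matrix.mul_apply, Matrix.star_apply, star_trivial, Matrix.one_apply_eq,
    Matrix.IsHermitian.eigenvectorUnitary_apply] at h2
  exact h2

lemma entrywise_spectral (i j : Fin n) :
    M i j = ∑ l, hM.eigenvalues l * (hM.eigenvectorBasis l i * hM.eigenvectorBasis l j) := by
  conv_lhs => rw [hM.spectral_theorem]
  simp only [Unitary.conjStarAlgAut_apply, Unitary.coe_star, Matrix.mul_apply, Matrix.diagonal_apply, Matrix.star_apply, star_trivial,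
    Function.comp_apply, RCLike.ofReal_real_eq_id, id_eq, mul_ite, mul_zero,
    Finset.sum_ite_eq', Finset.mem_univ, if_true,
    Matrix.IsHermitian.eigenvectorUnitary_apply]
  exact Finset.sum_congr rfl fun l _ => by ring

lemma eigen_quadform (k : Fin n) :
    hM.eigenvalues k
      = ∑ i, ∑ j, hM.eigenvectorBasis k i * (M i j * hM.eigenvectorBasis k j) := by
  have h := hM.mulVec_eigenvectorBasis k
  have h2 : ∑ i, hM.eigenvectorBasis k i * (M *ᵥ ⇑(hM.eigenvectorBasis k)) i
      = hM.eigenvalues k := by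
    rw [h]
    simp only [Pi.smul_apply, smul_eq_mul]
    rw [Finset.sum_congr rfl fun i _ => (mul_left_comm _ _ _), ← Finset.mul_sum,
      norm_rel hM k, mul_one]
  rw [← h2]
  refine Finset.sum_congr rfl fun i _ => ?_
  simp [Matrix.mulVec, dotProduct, Finset.mul_sum]

end helpers

theorem renyiEntropy_hadamard_ge {n : ℕ}
    (A B : Matrix (Fin n) (Fin n) ℝ)
    (hA : A.PosSemidef) (hB : B.PosSemidef)
    (hAnn : ∀ i j, 0 ≤ A i j) (hBnn : ∀ i j, 0 ≤ B i j)
    (htrA : A.trace = 1) (htrB : B.trace = 1)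
    (hdiag : ∀ i, A i i = 1 / (n : ℝ))
    (α : ℝ) (hα : 0 < α) (hα1 : α ≠ 1) :
    matrixRenyiEntropy α ((Matrix.trace (A ⊙ B))⁻¹ • (A ⊙ B)) ≥
      matrixRenyiEntropy α B := by
  classical
  have hn0 : n ≠ 0 := by
    rintro rfl
    simp [Matrix.trace] at htrA
  have hn : (0:ℝ) < n := by exact_mod_cast Nat.pos_of_ne_zero hn0
  have htrB' : ∑ i, B i i = 1 := by simpa [Matrix.trace, Matrix.diag] using htrB
  have hc : Matrix.trace (A ⊙ B) = (n:ℝ)⁻¹ := by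
    simp only [Matrix.trace, Matrix.diag, Matrix.hadamard_apply]
    calc ∑ i, A i i * B i i = ∑ i, (n:ℝ)⁻¹ * B i i := by
          refine Finset.sum_congr rfl fun i _ => ?_
          rw [hdiag i, one_div]
      _ = (n:ℝ)⁻¹ * ∑ i, B i i := (Finset.mul_sum _ _ _).symm
      _ = (n:ℝ)⁻¹ := by rw [htrB', mul_one]
  have hMentry : ∀ i j, ((Matrix.trace (A ⊙ B))⁻¹ • (A ⊙ B)) i j = (n:ℝ) * (A i j * B i j) := by
    intro i j
    simp [hc, Matrix.hadamard_apply]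
  have hAsymm : ∀ i j, A j i = A i j := fun i j => by
    have := hA.1.apply i j; simpa using this
  have hBsymm : ∀ i j, B j i = B i j := fun i j => by
    have := hB.1.apply i j; simpa using this
  have hMh : ((Matrix.trace (A ⊙ B))⁻¹ • (A ⊙ B)).IsHermitian := by
    show _ᴴ = _
    ext i j
    simp only [Matrix.conjTranspose_apply, star_trivial]
    rw [hMentry j i, hMentry i j, hAsymm i j, hBsymm i j]
  -- abbreviations (by name only, no `set`)
  have hBent : ∀ i j, B i j
      = ∑ l, hB.1.eigenvalues l * (hB.1.eigenvectorBasis l i * hB.1.eigenvectorBasis l j) :=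
    fun i j => entrywise_spectral hB.1 i j
  set D : Fin n → Fin n → ℝ := fun k l => ∑ i, ∑ j, ((n:ℝ) * A i j) *
      ((hMh.eigenvectorBasis k i * hMh.eigenvectorBasis k j) *
       (hB.1.eigenvectorBasis l i * hB.1.eigenvectorBasis l j)) with hD
  have hD0 : ∀ k l, 0 ≤ D k l := by
    intro k l
    have h := hA.dotProduct_mulVec_nonneg (fun i => hMh.eigenvectorBasis k i * hB.1.eigenvectorBasis l i)
    simp only [dotProduct, Matrix.mulVec, star_trivial, Pi.star_apply,
      Finset.mul_sum] at h
    have heq : D k l = (n:ℝ) * ∑ i, ∑ j, (hMh.eigenvectorBasis k i * hB.1.eigenvectorBasis l i)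
        * (A i j * (hMh.eigenvectorBasis k j * hB.1.eigenvectorBasis l j)) := by
      rw [hD, Finset.mul_sum]
      refine Finset.sum_congr rfl fun i _ => ?_
      rw [Finset.mul_sum]
      exact Finset.sum_congr rfl fun j _ => by ring
    rw [heq]
    exact mul_nonneg hn.le h
  have hrow : ∀ k, ∑ l, D k l = 1 := by
    intro k
    have h1 : ∑ l, D k l = ∑ i, ∑ j, ((n:ℝ) * A i j) *
        ((hMh.eigenvectorBasis k i * hMh.eigenvectorBasis k j) *
          ∑ l, hB.1.eigenvectorBasis l i * hB.1.eigenvectorBasis l j) := by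
      rw [hD, Finset.sum_comm]
      refine Finset.sum_congr rfl fun i _ => ?_
      rw [Finset.sum_comm]
      refine Finset.sum_congr rfl fun j _ => ?_
      simp only [← Finset.mul_sum]
    rw [h1]
    simp only [complete_rel hB.1]
    have h2 : ∀ i : Fin n, ∑ j, ((n:ℝ) * A i j) *
        ((hMh.eigenvectorBasis k i * hMh.eigenvectorBasis k j) *
          (1 : Matrix (Fin n) (Fin n) ℝ) i j)
        = hMh.eigenvectorBasis k i * hMh.eigenvectorBasis k i := by
      intro i
      rw [Finset.sum_eq_single i]
      · rw [Matrix.one_apply_eq, hdiag i, mul_one]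
        field_simp
      · intro j _ hj
        rw [Matrix.one_apply_ne (Ne.symm hj), mul_zero, mul_zero]
      · simp
    rw [Finset.sum_congr rfl fun i _ => h2 i]
    exact norm_rel hMh k
  have hcol : ∀ l, ∑ k, D k l = 1 := by
    intro l
    have h1 : ∑ k, D k l = ∑ i, ∑ j, ((n:ℝ) * A i j) *
        ((∑ k, hMh.eigenvectorBasis k i * hMh.eigenvectorBasis k j) *
          (hB.1.eigenvectorBasis l i * hB.1.eigenvectorBasis l j)) := by
      rw [hD, Finset.sum_comm]
      refine Finset.sum_congr rfl fun i _ => ?_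
      rw [Finset.sum_comm]
      refine Finset.sum_congr rfl fun j _ => ?_
      rw [Finset.sum_mul, ← Finset.mul_sum]
    rw [h1]
    simp only [complete_rel hMh]
    have h2 : ∀ i : Fin n, ∑ j, ((n:ℝ) * A i j) *
        ((1 : Matrix (Fin n) (Fin n) ℝ) i j *
          (hB.1.eigenvectorBasis l i * hB.1.eigenvectorBasis l j))
        = hB.1.eigenvectorBasis l i * hB.1.eigenvectorBasis l i := by
      intro i
      rw [Finset.sum_eq_single i]
      · rw [Matrix.one_apply_eq, hdiag i, one_mul]
        field_simp
      · intro j _ hj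
        rw [Matrix.one_apply_ne (Ne.symm hj), zero_mul, mul_zero]
      · simp
    rw [Finset.sum_congr rfl fun i _ => h2 i]
    exact norm_rel hB.1 l
  have hmu : ∀ k, hMh.eigenvalues k = ∑ l, D k l * hB.1.eigenvalues l := by
    intro k
    rw [eigen_quadform hMh k]
    have h1 : ∀ i j : Fin n, hMh.eigenvectorBasis k i *
        (((Matrix.trace (A ⊙ B))⁻¹ • (A ⊙ B)) i j * hMh.eigenvectorBasis k j)
        = ∑ l, hB.1.eigenvalues l * (((n:ℝ) * A i j) *
            ((hMh.eigenvectorBasis k i * hMh.eigenvectorBasis k j) *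
             (hB.1.eigenvectorBasis l i * hB.1.eigenvectorBasis l j))) := by
      intro i j
      rw [hMentry i j, hBent i j]
      simp only [Finset.mul_sum, Finset.sum_mul]
      exact Finset.sum_congr rfl fun l _ => by ring
    rw [Finset.sum_congr rfl fun i _ => Finset.sum_congr rfl fun j _ => h1 i j]
    rw [Finset.sum_congr rfl fun i (_: i ∈ Finset.univ) => Finset.sum_comm]
    rw [Finset.sum_comm]
    refine Finset.sum_congr rfl fun l _ => ?_
    simp only [hD, Finset.sum_mul]
    exact Finset.sum_congr rfl fun i _ => Finset.sum_congr rfl fun j _ => by ring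
  have hlam0 : ∀ l, 0 ≤ hB.1.eigenvalues l := fun l => hB.eigenvalues_nonneg l
  have hmu0 : ∀ k, 0 ≤ hMh.eigenvalues k := by
    intro k
    rw [hmu k]
    exact Finset.sum_nonneg fun l _ => mul_nonneg (hD0 k l) (hlam0 l)
  -- sums of eigenvalues
  have hsumlam : ∑ l, hB.1.eigenvalues l = 1 := by
    have h1 : Matrix.trace B = ∑ i, ∑ l, hB.1.eigenvalues l *
        (hB.1.eigenvectorBasis l i * hB.1.eigenvectorBasis l i) := by
      simp only [Matrix.trace, Matrix.diag]
      exact Finset.sum_congr rfl fun i _ => hBent i i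
    rw [htrB, Finset.sum_comm] at h1
    have h2 : ∀ l, ∑ i, hB.1.eigenvalues l *
        (hB.1.eigenvectorBasis l i * hB.1.eigenvectorBasis l i) = hB.1.eigenvalues l := by
      intro l
      rw [← Finset.mul_sum, norm_rel hB.1 l, mul_one]
    rw [Finset.sum_congr rfl fun l _ => h2 l] at h1
    exact h1.symm
  have hsummu : ∑ k, hMh.eigenvalues k = 1 := by
    calc ∑ k, hMh.eigenvalues k = ∑ k, ∑ l, D k l * hB.1.eigenvalues l :=
          Finset.sum_congr rfl fun k _ => hmu k
      _ = ∑ l, (∑ k, D k l) * hB.1.eigenvalues l := by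
          rw [Finset.sum_comm]
          exact Finset.sum_congr rfl fun l _ => (Finset.sum_mul _ _ _).symm
      _ = ∑ l, hB.1.eigenvalues l := Finset.sum_congr rfl fun l _ => by rw [hcol l, one_mul]
      _ = 1 := hsumlam
  -- positivity of trace powers
  have exlam : ∃ l, 0 < hB.1.eigenvalues l := by
    by_contra h
    push_neg at h
    have h0 : ∑ l, hB.1.eigenvalues l = 0 :=
      Finset.sum_eq_zero fun l _ => le_antisymm (h l) (hlam0 l)
    rw [hsumlam] at h0
    exact one_ne_zero h0
  have exmu : ∃ k, 0 < hMh.eigenvalues k := by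
    by_contra h
    push_neg at h
    have h0 : ∑ k, hMh.eigenvalues k = 0 :=
      Finset.sum_eq_zero fun k _ => le_antisymm (h k) (hmu0 k)
    rw [hsummu] at h0
    exact one_ne_zero h0
  obtain ⟨l₀, hl₀⟩ := exlam
  obtain ⟨k₀, hk₀⟩ := exmu
  have hTB : 0 < ∑ l, hB.1.eigenvalues l ^ α :=
    Finset.sum_pos' (fun l _ => Real.rpow_nonneg (hlam0 l) α)
      ⟨l₀, Finset.mem_univ _, Real.rpow_pos_of_pos hl₀ α⟩
  have hTM : 0 < ∑ k, hMh.eigenvalues k ^ α :=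
    Finset.sum_pos' (fun k _ => Real.rpow_nonneg (hmu0 k) α)
      ⟨k₀, Finset.mem_univ _, Real.rpow_pos_of_pos hk₀ α⟩
  -- unfold the entropy
  simp only [matrixRenyiEntropy, matrixPowTrace]
  rw [dif_pos hMh, dif_pos hB.1]
  rcases hα1.lt_or_gt with h1 | h1
  · -- α < 1 : concave case, T_M ≥ T_B
    have step : ∀ k, ∑ l, D k l * hB.1.eigenvalues l ^ α ≤ hMh.eigenvalues k ^ α := by
      intro k
      have hj := (Real.concaveOn_rpow hα.le h1.le).le_map_sum
        (t := Finset.univ) (w := D k) (p := hB.1.eigenvalues)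
        (fun l _ => hD0 k l) (hrow k) (fun l _ => hlam0 l)
      simp only [smul_eq_mul] at hj
      rw [hmu k]
      exact hj
    have hle : ∑ l, hB.1.eigenvalues l ^ α ≤ ∑ k, hMh.eigenvalues k ^ α := by
      calc ∑ l, hB.1.eigenvalues l ^ α = ∑ l, (∑ k, D k l) * hB.1.eigenvalues l ^ α := by
            refine Finset.sum_congr rfl fun l _ => by rw [hcol l, one_mul]
        _ = ∑ k, ∑ l, D k l * hB.1.eigenvalues l ^ α := by
            rw [Finset.sum_comm]
            exact Finset.sum_congr rfl fun l _ => Finset.sum_mul _ _ _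
        _ ≤ ∑ k, hMh.eigenvalues k ^ α := Finset.sum_le_sum fun k _ => step k
    have hlog := Real.logb_le_logb_of_le (by norm_num : (1:ℝ) < 2) hTB hle
    have hcoef : 0 ≤ 1/(1-α) := by
      have : 0 < 1 - α := by linarith
      positivity
    exact mul_le_mul_of_nonneg_left hlog hcoef
  · -- α > 1 : convex case, T_M ≤ T_B
    have step : ∀ k, hMh.eigenvalues k ^ α ≤ ∑ l, D k l * hB.1.eigenvalues l ^ α := by
      intro k
      have hj := (convexOn_rpow h1.le).map_sum_le
        (t := Finset.univ) (w := D k) (p := hB.1.eigenvalues)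
        (fun l _ => hD0 k l) (hrow k) (fun l _ => hlam0 l)
      simp only [smul_eq_mul] at hj
      rw [hmu k]
      exact hj
    have hle : ∑ k, hMh.eigenvalues k ^ α ≤ ∑ l, hB.1.eigenvalues l ^ α := by
      calc ∑ k, hMh.eigenvalues k ^ α ≤ ∑ k, ∑ l, D k l * hB.1.eigenvalues l ^ α :=
            Finset.sum_le_sum fun k _ => step k
        _ = ∑ l, (∑ k, D k l) * hB.1.eigenvalues l ^ α := by
            rw [Finset.sum_comm]
            exact Finset.sum_congr rfl fun l _ => (Finset.sum_mul _ _ _).symm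
        _ = ∑ l, hB.1.eigenvalues l ^ α :=
            Finset.sum_congr rfl fun l _ => by rw [hcol l, one_mul]
    have hlog := Real.logb_le_logb_of_le (by norm_num : (1:ℝ) < 2) hTM hle
    have hcoef : 1/(1-α) ≤ 0 := by
      have : 1 - α < 0 := by linarith
      rw [div_nonpos_iff]
      exact Or.inl ⟨zero_le_one, this.le⟩
    exact mul_le_mul_of_nonpos_left hlog hcoef
end

section
/- Let A and B be n×n real positive semidefinite matrices with nonnegative entries and tr(A) = tr(B) = 1, and suppose A_{ii} = 1/n for all i. Then the eigenvalue vector of B majorizes n times the eigenvalue vector of the Hadamard product A ∘ B; that is, if λ₁(A∘B) ≥ … ≥ λ_n(A∘B) and λ₁(B) ≥ … ≥ λ_n(B) denote the eigenvalues in decreasing order, then Σ_{i=1}^k n·λ_i(A∘B) ≤ Σ_{i=1}^k λ_i(B) for every k = 1, …, n, with equality of the full sums at k = n. -/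
open scoped BigOperators Matrix

/-- The eigenvalues of a real matrix (through its spectral decomposition when it is
Hermitian; junk value `0` otherwise). -/
noncomputable def matrixEigs {n : ℕ} (A : Matrix (Fin n) (Fin n) ℝ) : Fin n → ℝ :=
  if hA : A.IsHermitian then hA.eigenvalues else 0

/-- `Majorizes q p` : the vector `q` majorizes the vector `p`, i.e. the two vectors
have the same total sum and, when both are rearranged in decreasing order, every
partial sum of the first `k` entries of `p` is dominated by the corresponding partial
sum for `q`. -/
def Majorizes {n : ℕ} (q p : Fin n → ℝ) : Prop :=
  (∑ i, p i = ∑ i, q i) ∧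
    ∀ σ τ : Equiv.Perm (Fin n), Antitone (p ∘ σ) → Antitone (q ∘ τ) →
      ∀ k : ℕ,
        ∑ i ∈ Finset.univ.filter (fun i : Fin n => (i : ℕ) < k), p (σ i) ≤
          ∑ i ∈ Finset.univ.filter (fun i : Fin n => (i : ℕ) < k), q (τ i)

/-! ### Auxiliary lemmas -/

lemma matrixEigs_eq {n : ℕ} {M : Matrix (Fin n) (Fin n) ℝ} (hM : M.IsHermitian) :
    matrixEigs M = hM.eigenvalues := by
  unfold matrixEigs; rw [dif_pos hM]

lemma trace_eq_sum_eigs {n : ℕ} (M : Matrix (Fin n) (Fin n) ℝ) (hM : M.IsHermitian) :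
    M.trace = ∑ i, hM.eigenvalues i := by
  conv_lhs => rw [hM.spectral_theorem, Unitary.conjStarAlgAut_apply]
  rw [Matrix.trace_mul_comm, ← mul_assoc, Matrix.mem_unitaryGroup_iff'.mp
    (Matrix.IsHermitian.eigenvectorUnitary hM).2, one_mul, Matrix.trace_diagonal]
  simp [RCLike.ofReal]

lemma diagonal_ofReal_real {n : ℕ} (f : Fin n → ℝ) :
    Matrix.diagonal (RCLike.ofReal ∘ f) = Matrix.diagonal f := by
  simp [RCLike.ofReal_real_eq_id]

lemma posSemidef_diag_nn {n : ℕ} {M : Matrix (Fin n) (Fin n) ℝ} (hM : M.PosSemidef)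
    (j : Fin n) : 0 ≤ M j j := by
  have := hM.dotProduct_mulVec_nonneg (Pi.single j 1)
  simpa [dotProduct, Matrix.mulVec, Pi.single_apply, Finset.sum_ite_eq,
    Finset.sum_ite_eq'] using this

lemma isHermitian_entry {n : ℕ} {M : Matrix (Fin n) (Fin n) ℝ} (hM : M.IsHermitian)
    (i j : Fin n) : M j i = M i j := by
  have := congrFun (congrFun hM i) j
  simpa [Matrix.conjTranspose_apply] using this

lemma hadamard_quad_nonneg {n : ℕ} {P C : Matrix (Fin n) (Fin n) ℝ}
    (hP : P.PosSemidef) (hC : C.PosSemidef) (x : Fin n → ℝ) :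
    0 ≤ x ⬝ᵥ ((P ⊙ C) *ᵥ x) := by
  classical
  set U : Matrix (Fin n) (Fin n) ℝ := (hC.1.eigenvectorUnitary : Matrix (Fin n) (Fin n) ℝ) with hU
  set μ : Fin n → ℝ := hC.1.eigenvalues with hμ
  have entry : ∀ a b, C a b = ∑ j, U a j * μ j * U b j := by
    intro a b
    conv_lhs => rw [hC.1.spectral_theorem, Unitary.conjStarAlgAut_apply]
    rw [Matrix.mul_apply]
    refine Finset.sum_congr rfl fun j _ => ?_
    simp only [Matrix.mul_diagonal, Matrix.star_apply, star_trivial,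
      Matrix.IsHermitian.eigenvectorUnitary_apply, Function.comp_apply, hU, hμ,
      RCLike.ofReal_real_eq_id, id_eq]
  have key : x ⬝ᵥ ((P ⊙ C) *ᵥ x)
      = ∑ j, μ j * ((fun a => x a * U a j) ⬝ᵥ (P *ᵥ fun a => x a * U a j)) := by
    calc x ⬝ᵥ ((P ⊙ C) *ᵥ x)
        = ∑ a, ∑ b, x a * (P a b * C a b * x b) := by
          simp [dotProduct, Matrix.mulVec, Finset.mul_sum]
      _ = ∑ a, ∑ b, ∑ j, μ j * ((x a * U a j) * (P a b * (x b * U b j))) := by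
          refine Finset.sum_congr rfl fun a _ => Finset.sum_congr rfl fun b _ => ?_
          rw [entry a b]
          rw [Finset.mul_sum, Finset.sum_mul, Finset.mul_sum]
          exact Finset.sum_congr rfl fun j _ => by ring
      _ = ∑ a, ∑ j, ∑ b, μ j * ((x a * U a j) * (P a b * (x b * U b j))) :=
          Finset.sum_congr rfl fun a _ => Finset.sum_comm
      _ = ∑ j, ∑ a, ∑ b, μ j * ((x a * U a j) * (P a b * (x b * U b j))) :=
          Finset.sum_comm
      _ = ∑ j, μ j * ((fun a => x a * U a j) ⬝ᵥ (P *ᵥ fun a => x a * U a j)) := by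
          refine Finset.sum_congr rfl fun j _ => ?_
          simp [dotProduct, Matrix.mulVec, Finset.mul_sum]
  rw [key]
  refine Finset.sum_nonneg fun j _ => mul_nonneg (hC.eigenvalues_nonneg j) ?_
  have := hP.dotProduct_mulVec_nonneg (fun a => x a * U a j)
  simpa using this

lemma card_filter_lt_fin {n k : ℕ} (hk : k ≤ n) :
    (Finset.univ.filter (fun i : Fin n => (i : ℕ) < k)).card = k := by
  have : (Finset.univ.filter (fun i : Fin n => (i : ℕ) < k))
      = Finset.map (Fin.castLEEmb hk) (Finset.univ : Finset (Fin k)) := by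
    ext i
    simp only [Finset.mem_filter, Finset.mem_univ, true_and, Finset.mem_map,
      Fin.castLEEmb_apply]
    constructor
    · intro h; exact ⟨⟨i, h⟩, by simp [Fin.ext_iff]⟩
    · rintro ⟨j, rfl⟩; simpa using j.2
  rw [this]; simp

lemma fan_sum_le {n k : ℕ} (hk1 : 1 ≤ k) (hkn : k ≤ n) (ν t : Fin n → ℝ)
    (hν : Antitone ν) (ht0 : ∀ j, 0 ≤ t j) (ht1 : ∀ j, t j ≤ 1)
    (hts : ∑ j, t j = (k : ℝ)) :
    ∑ j, ν j * t j ≤ ∑ j ∈ Finset.univ.filter (fun j : Fin n => (j : ℕ) < k), ν j := by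
  have hkn' : k - 1 < n := by omega
  set c : ℝ := ν ⟨k - 1, hkn'⟩ with hc
  set F := Finset.univ.filter (fun j : Fin n => (j : ℕ) < k) with hF
  have hcard : F.card = k := card_filter_lt_fin hkn
  have h1 : ∑ j ∈ F, ν j * t j ≤ ∑ j ∈ F, (ν j + c * (t j - 1)) := by
    refine Finset.sum_le_sum fun j hj => ?_
    have hjk : (j : ℕ) < k := by simpa [hF] using hj
    have hcν : c ≤ ν j := hν (by rw [Fin.le_def]; simp; omega)
    nlinarith [mul_nonneg (sub_nonneg.2 hcν) (sub_nonneg.2 (ht1 j))]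
  have h2 : ∑ j ∈ Finset.univ.filter (fun j : Fin n => ¬ (j : ℕ) < k), ν j * t j
      ≤ ∑ j ∈ Finset.univ.filter (fun j : Fin n => ¬ (j : ℕ) < k), c * t j := by
    refine Finset.sum_le_sum fun j hj => ?_
    have hjk : ¬ (j : ℕ) < k := by simpa using hj
    have hνc : ν j ≤ c := hν (by rw [Fin.le_def]; simp; omega)
    exact mul_le_mul_of_nonneg_right hνc (ht0 j)
  calc ∑ j, ν j * t j
      = ∑ j ∈ F, ν j * t j
        + ∑ j ∈ Finset.univ.filter (fun j : Fin n => ¬ (j : ℕ) < k), ν j * t j := by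
        rw [hF, Finset.sum_filter_add_sum_filter_not]
    _ ≤ ∑ j ∈ F, (ν j + c * (t j - 1))
        + ∑ j ∈ Finset.univ.filter (fun j : Fin n => ¬ (j : ℕ) < k), c * t j :=
        add_le_add h1 h2
    _ = ∑ j ∈ F, ν j + c * ((∑ j, t j) - k) := by
        rw [Finset.sum_add_distrib]
        rw [← Finset.sum_filter_add_sum_filter_not Finset.univ
          (fun j : Fin n => (j : ℕ) < k) t, ← hF]
        rw [← Finset.mul_sum, ← Finset.mul_sum, Finset.sum_sub_distrib,
          Finset.sum_const, hcard]
        ring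
    _ = ∑ j ∈ F, ν j := by rw [hts]; ring

set_option maxHeartbeats 1000000 in
theorem eigenvalues_hadamard_majorized {n : ℕ}
    (A B : Matrix (Fin n) (Fin n) ℝ)
    (hA : A.PosSemidef) (hB : B.PosSemidef)
    (hAnn : ∀ i j, 0 ≤ A i j) (hBnn : ∀ i j, 0 ≤ B i j)
    (htrA : A.trace = 1) (htrB : B.trace = 1)
    (hdiag : ∀ i, A i i = 1 / (n : ℝ)) :
    Majorizes (matrixEigs B) (fun i => (n : ℝ) * matrixEigs (A ⊙ B) i) := by
  classical
  have hAsymm : ∀ i j, A j i = A i j := isHermitian_entry hA.1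
  have hBsymm : ∀ i j, B j i = B i j := isHermitian_entry hB.1
  have hHH : (A ⊙ B).IsHermitian := by
    ext i j
    simp only [Matrix.conjTranspose_apply, Matrix.hadamard_apply, star_trivial]
    rw [hAsymm, hBsymm]
  have hHB : B.IsHermitian := hB.1
  have hLeq : matrixEigs (A ⊙ B) = hHH.eigenvalues := matrixEigs_eq hHH
  have hμeq : matrixEigs B = hHB.eigenvalues := matrixEigs_eq hHB
  set lam : Fin n → ℝ := hHH.eigenvalues with hlam
  set μ : Fin n → ℝ := hHB.eigenvalues with hmu
  -- total sums agree
  have hsum : ∑ i, (n : ℝ) * lam i = ∑ i, μ i := by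
    rw [← Finset.mul_sum, hlam, hmu, ← trace_eq_sum_eigs _ hHH, ← trace_eq_sum_eigs _ hHB]
    rcases Nat.eq_zero_or_pos n with h0 | hpos
    · subst h0
      simp [Matrix.trace]
    · have hn0 : (n : ℝ) ≠ 0 := Nat.cast_ne_zero.2 hpos.ne'
      have : (A ⊙ B).trace = (1 / (n : ℝ)) * B.trace := by
        simp only [Matrix.trace, Matrix.diag, Matrix.hadamard_apply, Finset.mul_sum]
        exact Finset.sum_congr rfl fun i _ => by rw [hdiag i]
      rw [this]
      field_simp
  refine ⟨by simpa [hLeq, hμeq, hlam, hmu] using hsum, ?_⟩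
  intro σ τ hpσ hqτ k
  simp only [hLeq, hμeq, ← hlam, ← hmu]
  rcases Nat.eq_zero_or_pos k with hk0 | hk1
  · subst hk0; simp
  by_cases hkn : n ≤ k
  · have huniv : Finset.univ.filter (fun i : Fin n => (i : ℕ) < k) = Finset.univ := by
      ext i
      simpa using lt_of_lt_of_le i.2 hkn
    rw [huniv, Equiv.sum_comp σ (fun i => (n : ℝ) * lam i), Equiv.sum_comp τ μ]
    exact le_of_eq hsum
  push_neg at hkn
  have hkn' : k ≤ n := le_of_lt hkn
  have hn : 0 < n := lt_of_le_of_lt (Nat.zero_le k) hkn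
  have hn0 : (n : ℝ) ≠ 0 := Nat.cast_ne_zero.2 hn.ne'
  -- setup
  set U : Matrix (Fin n) (Fin n) ℝ := (hHH.eigenvectorUnitary : Matrix (Fin n) (Fin n) ℝ)
    with hUdef
  set V : Matrix (Fin n) (Fin n) ℝ := (hHB.eigenvectorUnitary : Matrix (Fin n) (Fin n) ℝ)
    with hVdef
  have hUU : U * star U = 1 := Matrix.mem_unitaryGroup_iff.mp hHH.eigenvectorUnitary.2
  have hU'U : star U * U = 1 := Matrix.mem_unitaryGroup_iff'.mp hHH.eigenvectorUnitary.2
  have hVV : V * star V = 1 := Matrix.mem_unitaryGroup_iff.mp hHB.eigenvectorUnitary.2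
  have hV'V : star V * V = 1 := Matrix.mem_unitaryGroup_iff'.mp hHB.eigenvectorUnitary.2
  set S : Finset (Fin n) := (Finset.univ.filter (fun i : Fin n => (i : ℕ) < k)).image σ
    with hSdef
  have hScard : S.card = k := by
    rw [hSdef, Finset.card_image_of_injective _ σ.injective, card_filter_lt_fin hkn']
  set d : Fin n → ℝ := fun i => if i ∈ S then 1 else 0 with hddef
  set P : Matrix (Fin n) (Fin n) ℝ := U * Matrix.diagonal d * star U with hPdef
  have hd0 : (0 : Fin n → ℝ) ≤ d := by
    intro i; rw [hddef]; dsimp only; split <;> norm_num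
  have hP : P.PosSemidef := by
    have := (Matrix.PosSemidef.diagonal hd0).mul_mul_conjTranspose_same U
    exact this
  have hIP : (1 - P).PosSemidef := by
    have h1d : (0 : Fin n → ℝ) ≤ fun i => 1 - d i := by
      intro i; rw [hddef]; dsimp only; split <;> norm_num
    have heq : 1 - P = U * Matrix.diagonal (fun i => 1 - d i) * star U := by
      have : Matrix.diagonal (fun i => 1 - d i) = 1 - Matrix.diagonal d := by
        rw [← Matrix.diagonal_one, ← Matrix.diagonal_sub]
      rw [this, Matrix.mul_sub, Matrix.sub_mul, Matrix.mul_one, hUU]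
    rw [heq]
    have := (Matrix.PosSemidef.diagonal h1d).mul_mul_conjTranspose_same U
    simpa [Matrix.star_eq_conjTranspose] using this
  set C : Matrix (Fin n) (Fin n) ℝ := (n : ℝ) • A with hCdef
  have hC : C.PosSemidef := by
    refine Matrix.PosSemidef.of_dotProduct_mulVec_nonneg ?_ fun x => ?_
    · show ((n : ℝ) • A)ᴴ = (n : ℝ) • A
      rw [Matrix.conjTranspose_smul, hA.1]
      simp
    · rw [hCdef, Matrix.smul_mulVec, dotProduct_smul]
      exact mul_nonneg (Nat.cast_nonneg n) (hA.dotProduct_mulVec_nonneg x)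
  have hCdiag : ∀ i, C i i = 1 := by
    intro i
    rw [hCdef]
    simp only [Matrix.smul_apply, hdiag i, smul_eq_mul]
    field_simp
  have hCsymm : ∀ i j, C j i = C i j := by
    intro i j; simp [hCdef, hAsymm i j]
  have hPsymm : ∀ i j, P j i = P i j := isHermitian_entry hP.1
  set Q : Matrix (Fin n) (Fin n) ℝ := P ⊙ C with hQdef
  have hQherm : Q.IsHermitian := by
    ext i j
    simp only [hQdef, Matrix.conjTranspose_apply, Matrix.hadamard_apply, star_trivial]
    rw [hPsymm, hCsymm]
  have hQ : Q.PosSemidef := Matrix.PosSemidef.of_dotProduct_mulVec_nonneg hQherm fun x => by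
    simpa using hadamard_quad_nonneg hP hC x
  have hQ1 : (1 - Q).PosSemidef := by
    have heq : 1 - Q = (1 - P) ⊙ C := by
      ext i j
      simp only [hQdef, Matrix.sub_apply, Matrix.hadamard_apply, Matrix.one_apply]
      by_cases hij : i = j
      · subst hij; simp [hCdiag i]
      · simp [hij]
    have hherm : (1 - Q).IsHermitian := by
      ext i j
      simp only [Matrix.conjTranspose_apply, Matrix.sub_apply, Matrix.one_apply, star_trivial]
      rw [isHermitian_entry hQherm i j]
      by_cases hij : i = j
      · subst hij; rfl
      · simp [hij, Ne.symm hij]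
    refine Matrix.PosSemidef.of_dotProduct_mulVec_nonneg hherm fun x => ?_
    rw [heq]
    simpa using hadamard_quad_nonneg hIP hC x
  set t : Fin n → ℝ := fun j => (star V * Q * V) j j with htdef
  have hVQV : (star V * Q * V).PosSemidef := by
    have := hQ.conjTranspose_mul_mul_same V
    simpa [Matrix.star_eq_conjTranspose] using this
  have ht0 : ∀ j, 0 ≤ t j := fun j => posSemidef_diag_nn hVQV j
  have ht1 : ∀ j, t j ≤ 1 := by
    intro j
    have hps : (star V * (1 - Q) * V).PosSemidef := by
      have := hQ1.conjTranspose_mul_mul_same V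
      simpa [Matrix.star_eq_conjTranspose] using this
    have heq : star V * (1 - Q) * V = 1 - star V * Q * V := by
      rw [Matrix.mul_sub, Matrix.mul_one, Matrix.sub_mul, hV'V]
    have := posSemidef_diag_nn (heq ▸ hps) j
    simp only [Matrix.sub_apply, Matrix.one_apply_eq] at this
    linarith [this]
  -- trace of Q is k
  have htrP : ∀ (X : Matrix (Fin n) (Fin n) ℝ),
      (U * X * star U).trace = X.trace := by
    intro X
    rw [Matrix.trace_mul_cycle, hU'U, one_mul]
  have htrQ : Q.trace = (k : ℝ) := by
    have h1 : Q.trace = P.trace := by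
      simp only [Matrix.trace, Matrix.diag, hQdef, Matrix.hadamard_apply]
      exact Finset.sum_congr rfl fun i _ => by rw [hCdiag i, mul_one]
    rw [h1, hPdef, htrP, Matrix.trace_diagonal]
    rw [hddef]
    simp only [Finset.sum_ite_mem, Finset.univ_inter, Finset.sum_const, nsmul_eq_mul, mul_one]
    rw [hScard]
  have hts : ∑ j, t j = (k : ℝ) := by
    have : ∑ j, t j = (star V * Q * V).trace := by
      simp [htdef, Matrix.trace, Matrix.diag]
    rw [this, Matrix.trace_mul_cycle, hVV, one_mul, htrQ]
  -- trace (P * (A ⊙ B)) = ∑ i in S, lam i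
  have hPH : (P * (A ⊙ B)).trace = ∑ i ∈ S, lam i := by
    have hspec : A ⊙ B = U * Matrix.diagonal lam * star U := by
      conv_lhs => rw [hHH.spectral_theorem, Unitary.conjStarAlgAut_apply]
      rw [diagonal_ofReal_real]
    have hmul : P * (A ⊙ B) = U * Matrix.diagonal (fun i => d i * lam i) * star U := by
      rw [hspec, hPdef]
      calc U * Matrix.diagonal d * star U * (U * Matrix.diagonal lam * star U)
          = U * Matrix.diagonal d * (star U * U) * Matrix.diagonal lam * star U := by
            simp only [mul_assoc]
        _ = U * (Matrix.diagonal d * Matrix.diagonal lam) * star U := by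
            rw [hU'U, mul_one, mul_assoc, mul_assoc, mul_assoc, mul_assoc]
        _ = U * Matrix.diagonal (fun i => d i * lam i) * star U := by
            rw [Matrix.diagonal_mul_diagonal]
    rw [hmul, htrP, Matrix.trace_diagonal]
    rw [hddef]
    simp only [ite_mul, one_mul, zero_mul]
    rw [Finset.sum_ite_mem, Finset.univ_inter]
  -- trace (Q * B) = n * trace (P * (A ⊙ B))
  have hQB : (Q * B).trace = (n : ℝ) * (P * (A ⊙ B)).trace := by
    simp only [Matrix.trace, Matrix.diag, Matrix.mul_apply, Finset.mul_sum]
    rw [Finset.sum_comm]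
    conv_rhs => rw [Finset.sum_comm]
    refine Finset.sum_congr rfl fun j _ => Finset.sum_congr rfl fun i _ => ?_
    simp only [hQdef, Matrix.hadamard_apply, hCdef, Matrix.smul_apply, smul_eq_mul]
    rw [hAsymm j i]
    ring
  -- trace (Q * B) = ∑ j, μ j * t j
  have hQBμ : (Q * B).trace = ∑ j, μ j * t j := by
    have hspecB : B = V * Matrix.diagonal μ * star V := by
      conv_lhs => rw [hHB.spectral_theorem, Unitary.conjStarAlgAut_apply]
      rw [diagonal_ofReal_real]
    calc (Q * B).trace = (Q * (V * Matrix.diagonal μ * star V)).trace := by rw [← hspecB]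
      _ = ((star V * Q * V) * Matrix.diagonal μ).trace := by
          rw [show Q * (V * Matrix.diagonal μ * star V)
              = (Q * V) * Matrix.diagonal μ * star V from by
            simp only [mul_assoc]]
          rw [Matrix.trace_mul_cycle]
          congr 1
          simp only [mul_assoc]
      _ = ∑ j, μ j * t j := by
          simp only [Matrix.trace, Matrix.diag, Matrix.mul_diagonal, htdef]
          exact Finset.sum_congr rfl fun j _ => mul_comm _ _
  -- LHS equals n * trace(P * (A ⊙ B))
  have hLHS : ∑ i ∈ Finset.univ.filter (fun i : Fin n => (i : ℕ) < k), (n : ℝ) * lam (σ i)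
      = (n : ℝ) * (P * (A ⊙ B)).trace := by
    rw [hPH, ← Finset.mul_sum]
    congr 1
    rw [hSdef, Finset.sum_image (fun a _ b _ h => σ.injective h)]
  rw [hLHS, ← hQB, hQBμ]
  have hμτ : Antitone (μ ∘ τ) := by
    have : (matrixEigs B) ∘ τ = μ ∘ τ := by rw [hμeq, hmu]
    rwa [this] at hqτ
  have hperm : ∑ j, μ j * t j = ∑ j, (μ ∘ τ) j * (t ∘ τ) j := by
    exact (Equiv.sum_comp τ (fun j => μ j * t j)).symm
  rw [hperm]
  have htsτ : ∑ j, (t ∘ τ) j = (k : ℝ) := by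
    exact (Equiv.sum_comp τ t).trans hts
  exact fan_sum_le hk1 hkn' (μ ∘ τ) (t ∘ τ) hμτ (fun j => ht0 (τ j)) (fun j => ht1 (τ j)) htsτ
end

section
/- Let A be an n×n real symmetric infinitely divisible matrix with strictly positive entries, i.e., the entrywise power A^{∘r} with entries A_{ij}^r is positive semidefinite for every r ≥ 0. Then the matrix B with entries B_{ij} = −log A_{ij} is negative definite, i.e., Σ_{i,j=1}^n α_i α_j B_{ij} ≤ 0 for every α ∈ ℝⁿ with Σ_{i=1}^n α_i = 0. -/
open scoped BigOperators Matrix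

theorem neg_log_of_infinitely_divisible_is_negative_definite {n : ℕ}
    (A : Matrix (Fin n) (Fin n) ℝ) (hsymm : A.IsSymm)
    (hpos : ∀ i j, 0 < A i j)
    (hID : ∀ r : ℝ, 0 ≤ r → (Matrix.of fun i j => A i j ^ r).PosSemidef) :
    ∀ v : Fin n → ℝ, ∑ i, v i = 0 →
      ∑ i, ∑ j, v i * v j * (-Real.log (A i j)) ≤ 0 := by
  intro v hv
  set f : ℝ → ℝ := fun r => ∑ i, ∑ j, v i * v j * (A i j ^ r) with hf
  set L : ℝ := ∑ i, ∑ j, v i * v j * Real.log (A i j) with hL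
  have hderiv : HasDerivAt f L 0 := by
    have h : HasDerivAt f
        (∑ i, ∑ j, v i * v j * ((A i j) ^ (0:ℝ) * Real.log (A i j))) 0 := by
      apply HasDerivAt.fun_sum
      intro i _
      apply HasDerivAt.fun_sum
      intro j _
      exact ((Real.hasStrictDerivAt_const_rpow (hpos i j) 0).hasDerivAt).const_mul _
    have he : (∑ i, ∑ j, v i * v j * ((A i j) ^ (0:ℝ) * Real.log (A i j))) = L := by
      simp [hL, Real.rpow_zero]
    rwa [he] at h
  have hf0 : f 0 = 0 := by
    simp only [hf, Real.rpow_zero, mul_one, ← Finset.mul_sum, hv, mul_zero,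
      Finset.sum_const_zero]
  have hfr : ∀ r : ℝ, 0 < r → 0 ≤ f r := by
    intro r hr
    have h := (hID r hr.le).dotProduct_mulVec_nonneg v
    simp only [dotProduct, Matrix.mulVec, star, Matrix.of_apply] at h
    calc (0:ℝ) ≤ ∑ i, v i * ∑ j, A i j ^ r * v j := h
    _ = f r := by
      simp only [hf, Finset.mul_sum]
      exact Finset.sum_congr rfl fun i _ => Finset.sum_congr rfl fun j _ => by ring
  have hLnonneg : 0 ≤ L := by
    have hW : HasDerivWithinAt f L (Set.Ioi (0:ℝ)) 0 := hderiv.hasDerivWithinAt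
    rw [hasDerivWithinAt_iff_tendsto_slope] at hW
    have hev : ∀ᶠ r in nhdsWithin (0:ℝ) (Set.Ioi 0 \ {0}), 0 ≤ slope f 0 r := by
      filter_upwards [self_mem_nhdsWithin] with r hr
      have hr' : 0 < r := hr.1
      have : 0 ≤ f r := hfr r hr'
      rw [slope_def_field, hf0, sub_zero, sub_zero]
      exact div_nonneg (hfr r hr') hr'.le
    rw [Set.diff_singleton_eq_self (by simp)] at hW hev
    exact ge_of_tendsto hW hev
  have : ∑ i, ∑ j, v i * v j * (-Real.log (A i j)) = -L := by
    simp [hL, Finset.sum_neg_distrib, mul_neg]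
  rw [this]
  linarith
end
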